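/- Let 𝕡 be the 4×4 orthogonal projection onto the singlet vector (|10⟩ − |01⟩)/√2 in ℂ² ⊗ ℂ², and for λ ∈ [0,1] let ρ_λ := (1−λ)/3 · (𝟙₄ − 𝕡) + λ 𝕡. Then ρ_λ is a two-qubit density matrix, and ρ_λ is separable (a finite convex combination of Kronecker products of 2×2 density matrices) if and only if 0 ≤ λ ≤ 1/2; for 1/2 < λ ≤ 1 it is entangled. -/

import Mathlib

open Kronecker
open Matrix
open scoped ComplexOrder

/-- The Pauli matrix `σ_x`. -/
def pauliX : Matrix (Fin 2) (Fin 2) ℂ := !![0, 1; 1, 0]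
/-- The Pauli matrix `σ_y`. -/
def pauliY : Matrix (Fin 2) (Fin 2) ℂ := !![0, -Complex.I; Complex.I, 0]
/-- The Pauli matrix `σ_z`. -/
def pauliZ : Matrix (Fin 2) (Fin 2) ℂ := !![1, 0; 0, -1]

/-- The orthogonal projection onto the singlet vector `(|10⟩ − |01⟩)/√2` in `ℂ² ⊗ ℂ²`,
`𝕡 = ¼(𝟙₄ − σ_x⊗σ_x − σ_y⊗σ_y − σ_z⊗σ_z)`. -/
noncomputable def singletProj : Matrix (Fin 2 × Fin 2) (Fin 2 × Fin 2) ℂ :=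
  (1/4 : ℂ) • ((1 : Matrix (Fin 2 × Fin 2) (Fin 2 × Fin 2) ℂ)
    - pauliX ⊗ₖ pauliX - pauliY ⊗ₖ pauliY - pauliZ ⊗ₖ pauliZ)

/-- A density matrix: positive semidefinite with trace one. -/
def IsDensityMatrix {m : Type*} [Fintype m] [DecidableEq m] (M : Matrix m m ℂ) : Prop :=
  M.PosSemidef ∧ M.trace = 1

/-- A separable two-qubit density matrix: a finite convex combination of Kronecker
products of single-qubit density matrices. -/
def SeparableTwoQubit (ρ : Matrix (Fin 2 × Fin 2) (Fin 2 × Fin 2) ℂ) : Prop :=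
  ∃ (n : ℕ) (c : Fin n → ℝ) (σ τ : Fin n → Matrix (Fin 2) (Fin 2) ℂ),
    (∀ i, 0 ≤ c i) ∧ (∑ i, c i = 1) ∧
    (∀ i, IsDensityMatrix (σ i)) ∧ (∀ i, IsDensityMatrix (τ i)) ∧
    ρ = ∑ i, (c i : ℂ) • (σ i ⊗ₖ τ i)

/-- The SU(2)-invariant two-qubit (Werner) state
`ρ_λ = (1−λ)/3 · (𝟙₄ − 𝕡) + λ 𝕡`. -/
noncomputable def wernerState (lam : ℝ) : Matrix (Fin 2 × Fin 2) (Fin 2 × Fin 2) ℂ :=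
  (((1 - lam) / 3 : ℝ) : ℂ) • ((1 : Matrix (Fin 2 × Fin 2) (Fin 2 × Fin 2) ℂ) - singletProj)
    + ((lam : ℝ) : ℂ) • singletProj

/-! ### Auxiliary single-qubit density matrices -/

noncomputable def Xp : Matrix (Fin 2) (Fin 2) ℂ := !![1/2, 1/2; 1/2, 1/2]
noncomputable def Xm : Matrix (Fin 2) (Fin 2) ℂ := !![1/2, -(1/2); -(1/2), 1/2]
noncomputable def Yp : Matrix (Fin 2) (Fin 2) ℂ := !![1/2, -(Complex.I/2); Complex.I/2, 1/2]
noncomputable def Ym : Matrix (Fin 2) (Fin 2) ℂ := !![1/2, Complex.I/2; -(Complex.I/2), 1/2]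
noncomputable def Zp : Matrix (Fin 2) (Fin 2) ℂ := !![1, 0; 0, 0]
noncomputable def Zm : Matrix (Fin 2) (Fin 2) ℂ := !![0, 0; 0, 1]

lemma qf_Xp (x : Fin 2 → ℂ) : dotProduct (star x) (Xp *ᵥ x)
    = (1/2 : ℂ) * (star (x 0 + x 1) * (x 0 + x 1)) := by
  simp [dotProduct, mulVec, Xp, Fin.sum_univ_two]; ring

lemma qf_Xm (x : Fin 2 → ℂ) : dotProduct (star x) (Xm *ᵥ x)
    = (1/2 : ℂ) * (star (x 0 - x 1) * (x 0 - x 1)) := by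
  simp [dotProduct, mulVec, Xm, Fin.sum_univ_two]; ring

lemma qf_Yp (x : Fin 2 → ℂ) : dotProduct (star x) (Yp *ᵥ x)
    = (1/2 : ℂ) * (star (x 0 - Complex.I * x 1) * (x 0 - Complex.I * x 1)) := by
  simp [dotProduct, mulVec, Yp, Fin.sum_univ_two, Complex.star_def, Complex.conj_I]
  ring_nf
  simp only [Complex.I_sq]
  ring

lemma qf_Ym (x : Fin 2 → ℂ) : dotProduct (star x) (Ym *ᵥ x)
    = (1/2 : ℂ) * (star (x 0 + Complex.I * x 1) * (x 0 + Complex.I * x 1)) := by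
  simp [dotProduct, mulVec, Ym, Fin.sum_univ_two, Complex.star_def, Complex.conj_I]
  ring_nf
  simp only [Complex.I_sq]
  ring

lemma qf_Zp (x : Fin 2 → ℂ) : dotProduct (star x) (Zp *ᵥ x) = star (x 0) * x 0 := by
  simp [dotProduct, mulVec, Zp, Fin.sum_univ_two]

lemma qf_Zm (x : Fin 2 → ℂ) : dotProduct (star x) (Zm *ᵥ x) = star (x 1) * x 1 := by
  simp [dotProduct, mulVec, Zm, Fin.sum_univ_two]

lemma dm_Xp : IsDensityMatrix Xp := by
  refine ⟨.of_dotProduct_mulVec_nonneg ?_ fun x => ?_, ?_⟩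
  · ext i j; fin_cases i <;> fin_cases j <;> simp [Xp]
  · rw [qf_Xp]
    exact mul_nonneg (by norm_num [Complex.nonneg_iff]) (star_mul_self_nonneg _)
  · simp [Xp, Matrix.trace_fin_two]; norm_num

lemma dm_Xm : IsDensityMatrix Xm := by
  refine ⟨.of_dotProduct_mulVec_nonneg ?_ fun x => ?_, ?_⟩
  · ext i j; fin_cases i <;> fin_cases j <;> simp [Xm]
  · rw [qf_Xm]
    exact mul_nonneg (by norm_num [Complex.nonneg_iff]) (star_mul_self_nonneg _)
  · simp [Xm, Matrix.trace_fin_two]; norm_num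

lemma dm_Yp : IsDensityMatrix Yp := by
  refine ⟨.of_dotProduct_mulVec_nonneg ?_ fun x => ?_, ?_⟩
  · ext i j; fin_cases i <;> fin_cases j <;> simp [Yp, Complex.ext_iff] <;> norm_num
  · rw [qf_Yp]
    exact mul_nonneg (by norm_num [Complex.nonneg_iff]) (star_mul_self_nonneg _)
  · simp [Yp, Matrix.trace_fin_two]; norm_num

lemma dm_Ym : IsDensityMatrix Ym := by
  refine ⟨.of_dotProduct_mulVec_nonneg ?_ fun x => ?_, ?_⟩
  · ext i j; fin_cases i <;> fin_cases j <;> simp [Ym, Complex.ext_iff] <;> norm_num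
  · rw [qf_Ym]
    exact mul_nonneg (by norm_num [Complex.nonneg_iff]) (star_mul_self_nonneg _)
  · simp [Ym, Matrix.trace_fin_two]; norm_num

lemma dm_Zp : IsDensityMatrix Zp := by
  refine ⟨.of_dotProduct_mulVec_nonneg ?_ fun x => ?_, ?_⟩
  · ext i j; fin_cases i <;> fin_cases j <;> simp [Zp]
  · rw [qf_Zp]; exact star_mul_self_nonneg _
  · simp [Zp, Matrix.trace_fin_two]

lemma dm_Zm : IsDensityMatrix Zm := by
  refine ⟨.of_dotProduct_mulVec_nonneg ?_ fun x => ?_, ?_⟩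
  · ext i j; fin_cases i <;> fin_cases j <;> simp [Zm]
  · rw [qf_Zm]; exact star_mul_self_nonneg _
  · simp [Zm, Matrix.trace_fin_two]

noncomputable def sig : Fin 12 → Matrix (Fin 2) (Fin 2) ℂ :=
  ![Xp, Xm, Yp, Ym, Zp, Zm, Xp, Xm, Yp, Ym, Zp, Zm]
noncomputable def tau : Fin 12 → Matrix (Fin 2) (Fin 2) ℂ :=
  ![Xp, Xm, Yp, Ym, Zp, Zm, Xm, Xp, Ym, Yp, Zm, Zp]
noncomputable def cw (lam : ℝ) : Fin 12 → ℝ :=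
  ![(1-2*lam)/6, (1-2*lam)/6, (1-2*lam)/6, (1-2*lam)/6, (1-2*lam)/6, (1-2*lam)/6,
    lam/3, lam/3, lam/3, lam/3, lam/3, lam/3]

set_option maxHeartbeats 2000000 in
lemma werner_decomp (lam : ℝ) :
    wernerState lam = ∑ i, (cw lam i : ℂ) • (sig i ⊗ₖ tau i) := by
  ext ⟨i, j⟩ ⟨k, l⟩
  fin_cases i <;> fin_cases j <;> fin_cases k <;> fin_cases l <;>
      simp [wernerState, singletProj, pauliX, pauliY, pauliZ, sig, tau, cw, Prod.ext_iff,
        Xp, Xm, Yp, Ym, Zp, Zm, Fin.sum_univ_succ, Matrix.one_apply] <;>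
      ring_nf <;> (try simp only [Complex.I_sq]) <;> (try ring)

/-! ### Werner state is a density matrix -/

lemma werner_qf (lam : ℝ) (x : Fin 2 × Fin 2 → ℂ) :
    dotProduct (star x) (wernerState lam *ᵥ x) =
    (((1-lam)/3 : ℝ):ℂ) * (star (x (0,0)) * x (0,0) + star (x (1,1)) * x (1,1)
        + (1/2) * (star (x (0,1) + x (1,0)) * (x (0,1) + x (1,0))))
      + ((lam:ℝ):ℂ) * ((1/2) * (star (x (0,1) - x (1,0)) * (x (0,1) - x (1,0)))) := by
  simp [dotProduct, mulVec, wernerState, singletProj, pauliX, pauliY, pauliZ,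
    Matrix.one_apply, Fintype.sum_prod_type, Fin.sum_univ_two]
  ring

lemma werner_density (lam : ℝ) (h0 : 0 ≤ lam) (h1 : lam ≤ 1) :
    IsDensityMatrix (wernerState lam) := by
  refine ⟨.of_dotProduct_mulVec_nonneg ?_ fun x => ?_, ?_⟩
  · ext ⟨i, j⟩ ⟨k, l⟩
    fin_cases i <;> fin_cases j <;> fin_cases k <;> fin_cases l <;>
      simp [wernerState, singletProj, pauliX, pauliY, pauliZ, Prod.ext_iff,
        Matrix.one_apply, Complex.ext_iff]
  · rw [werner_qf]
    have hμ : (0:ℝ) ≤ (1 - lam)/3 := by linarith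
    refine add_nonneg (mul_nonneg ?_ ?_) (mul_nonneg ?_ ?_)
    · exact Complex.zero_le_real.mpr hμ
    · refine add_nonneg (add_nonneg (star_mul_self_nonneg _) (star_mul_self_nonneg _)) ?_
      exact mul_nonneg (by norm_num [Complex.nonneg_iff]) (star_mul_self_nonneg _)
    · exact Complex.zero_le_real.mpr h0
    · exact mul_nonneg (by norm_num [Complex.nonneg_iff]) (star_mul_self_nonneg _)
  · simp [Matrix.trace, Matrix.diag, wernerState, singletProj, pauliX, pauliY, pauliZ,
      Matrix.one_apply, Fintype.sum_prod_type, Fin.sum_univ_two]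
    ring

/-! ### Facts about 2×2 density matrices -/

lemma dm_facts {σ : Matrix (Fin 2) (Fin 2) ℂ} (h : IsDensityMatrix σ) :
    σ 0 0 = ((σ 0 0).re : ℂ) ∧ σ 1 1 = ((σ 1 1).re : ℂ) ∧
    σ 1 0 = (starRingEnd ℂ) (σ 0 1) ∧ 0 ≤ (σ 0 0).re ∧ 0 ≤ (σ 1 1).re ∧
    (σ 0 0).re + (σ 1 1).re = 1 ∧
    Complex.normSq (σ 0 1) ≤ (σ 0 0).re * (σ 1 1).re := by
  obtain ⟨⟨hherm, hq⟩, htr⟩ := And.imp_left posSemidef_iff_dotProduct_mulVec.mp h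
  have h00 : 0 ≤ σ 0 0 := by
    have := hq ![1, 0]
    simpa [dotProduct, mulVec, Fin.sum_univ_two] using this
  have h11 : 0 ≤ σ 1 1 := by
    have := hq ![0, 1]
    simpa [dotProduct, mulVec, Fin.sum_univ_two] using this
  have h00' := Complex.nonneg_iff.mp h00
  have h11' := Complex.nonneg_iff.mp h11
  have e00 : σ 0 0 = ((σ 0 0).re : ℂ) := by
    apply Complex.ext <;> simp [h00'.2.symm]
  have e11 : σ 1 1 = ((σ 1 1).re : ℂ) := by
    apply Complex.ext <;> simp [h11'.2.symm]
  have e10 : σ 1 0 = (starRingEnd ℂ) (σ 0 1) := by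
    have := congrFun (congrFun hherm 1) 0
    simpa [Matrix.conjTranspose_apply] using this.symm
  have etr : (σ 0 0).re + (σ 1 1).re = 1 := by
    have : σ 0 0 + σ 1 1 = 1 := by
      simpa [Matrix.trace_fin_two] using htr
    have := congrArg Complex.re this
    simpa using this
  refine ⟨e00, e11, e10, h00'.1, h11'.1, etr, ?_⟩
  -- determinant inequality
  have hd := hq ![σ 1 1, -(σ 1 0)]
  have ha := hq ![-(σ 0 1), σ 0 0]
  have hdval : dotProduct (star ![σ 1 1, -(σ 1 0)]) (σ *ᵥ ![σ 1 1, -(σ 1 0)])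
      = (((σ 1 1).re * ((σ 0 0).re * (σ 1 1).re - Complex.normSq (σ 0 1)) : ℝ) : ℂ) := by
    simp only [dotProduct, mulVec, Fin.sum_univ_two, Matrix.cons_val_zero, Matrix.cons_val_one,
      Matrix.head_cons, Pi.star_apply, star_neg]
    rw [e10, e00, e11]
    simp [Complex.ext_iff, Complex.mul_re, Complex.mul_im, Complex.normSq_apply,
      Complex.conj_re, Complex.conj_im]
    constructor <;> ring
  have haval : dotProduct (star ![-(σ 0 1), σ 0 0]) (σ *ᵥ ![-(σ 0 1), σ 0 0])
      = (((σ 0 0).re * ((σ 0 0).re * (σ 1 1).re - Complex.normSq (σ 0 1)) : ℝ) : ℂ) := by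
    simp only [dotProduct, mulVec, Fin.sum_univ_two, Matrix.cons_val_zero, Matrix.cons_val_one,
      Matrix.head_cons, Pi.star_apply, star_neg]
    rw [e10, e00, e11]
    simp [Complex.ext_iff, Complex.mul_re, Complex.mul_im, Complex.normSq_apply,
      Complex.conj_re, Complex.conj_im]
    constructor <;> ring
  rw [hdval] at hd
  rw [haval] at ha
  have hd' : 0 ≤ (σ 1 1).re * ((σ 0 0).re * (σ 1 1).re - Complex.normSq (σ 0 1)) := by
    exact_mod_cast hd
  have ha' : 0 ≤ (σ 0 0).re * ((σ 0 0).re * (σ 1 1).re - Complex.normSq (σ 0 1)) := by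
    exact_mod_cast ha
  have hE : 0 ≤ (σ 0 0).re * (σ 1 1).re - Complex.normSq (σ 0 1) := by
    nlinarith [hd', ha']
  linarith

set_option maxHeartbeats 1000000 in
/-- The key entanglement-witness bound: for single-qubit density matrices `σ, τ`,
the singlet overlap of `σ ⊗ τ` is at most `1/2`. -/
lemma key_bound {σ τ : Matrix (Fin 2) (Fin 2) ℂ}
    (hσ : IsDensityMatrix σ) (hτ : IsDensityMatrix τ) :
    (σ 0 0 * τ 1 1 + σ 1 1 * τ 0 0 - σ 0 1 * τ 1 0 - σ 1 0 * τ 0 1).re ≤ 1 := by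
  obtain ⟨e00, e11, e10, hσ0, hσ1, hσt, hσd⟩ := dm_facts hσ
  obtain ⟨f00, f11, f10, hτ0, hτ1, hτt, hτd⟩ := dm_facts hτ
  set a := (σ 0 0).re
  set d := (σ 1 1).re
  set c := (τ 0 0).re
  set f := (τ 1 1).re
  set b := σ 0 1
  set e := τ 0 1
  have expand : (σ 0 0 * τ 1 1 + σ 1 1 * τ 0 0 - σ 0 1 * τ 1 0 - σ 1 0 * τ 0 1).re
      = a * f + d * c - 2 * (b.re * e.re + b.im * e.im) := by
    rw [e00, e11, e10, f00, f11, f10]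
    simp [Complex.add_re, Complex.sub_re, Complex.mul_re, Complex.conj_re, Complex.conj_im]
    ring
  rw [expand]
  have hb : b.re ^ 2 + b.im ^ 2 ≤ a * d := by
    have : Complex.normSq b = b.re ^ 2 + b.im ^ 2 := by
      simp [Complex.normSq_apply]; ring
    linarith [hσd, this.symm.le]
  have he : e.re ^ 2 + e.im ^ 2 ≤ c * f := by
    have : Complex.normSq e = e.re ^ 2 + e.im ^ 2 := by
      simp [Complex.normSq_apply]; ring
    linarith [hτd, this.symm.le]
  have hb0 : (0:ℝ) ≤ b.re ^ 2 + b.im ^ 2 := by positivity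
  have he0 : (0:ℝ) ≤ e.re ^ 2 + e.im ^ 2 := by positivity
  have hprod : (b.re ^ 2 + b.im ^ 2) * (e.re ^ 2 + e.im ^ 2) ≤ (a * d) * (c * f) :=
    mul_le_mul hb he he0 (le_trans hb0 hb)
  have hr2 : (b.re * e.re + b.im * e.im) ^ 2 ≤ (a * d) * (c * f) := by
    nlinarith [sq_nonneg (b.re * e.im - b.im * e.re)]
  set r := b.re * e.re + b.im * e.im with hr
  have hX : (0:ℝ) ≤ a * c + d * f := by positivity
  have h4 : 4 * ((a * d) * (c * f)) ≤ (a * c + d * f) ^ 2 := by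
    nlinarith [sq_nonneg (a * c - d * f)]
  have hsum1 : (a + d) * (c + f) = 1 := by rw [hσt, hτt]; norm_num
  by_contra hcon
  push_neg at hcon
  have hneg : a * c + d * f < -(2 * r) := by nlinarith [hcon, hsum1]
  have h2 : (a * c + d * f) ^ 2 < (-(2 * r)) ^ 2 := by
    exact pow_lt_pow_left₀ hneg hX (by norm_num)
  have h3 : (-(2 * r)) ^ 2 = 4 * r ^ 2 := by ring
  nlinarith [hr2, h4, h2, h3]

lemma werner_entry (lam : ℝ) :
    (wernerState lam (0,1) (0,1) + wernerState lam (1,0) (1,0)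
      - wernerState lam (0,1) (1,0) - wernerState lam (1,0) (0,1)).re = 2 * lam := by
  simp [wernerState, singletProj, pauliX, pauliY, pauliZ, Matrix.one_apply, Prod.ext_iff,
    Complex.ext_iff]
  ring

/-! ### Main theorem -/

/-- For `λ ∈ [0,1]`, the state `ρ_λ = (1−λ)/3 (𝟙 − 𝕡) + λ 𝕡` is a two-qubit
density matrix, and it is separable if and only if `λ ≤ 1/2` (entangled for `1/2 < λ ≤ 1`). -/
theorem werner_separable_iff (lam : ℝ) (hlam : lam ∈ Set.Icc (0 : ℝ) 1) :
    IsDensityMatrix (wernerState lam) ∧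
    (SeparableTwoQubit (wernerState lam) ↔ lam ≤ 1/2) := by
  obtain ⟨h0, h1⟩ := hlam
  refine ⟨werner_density lam h0 h1, ?_, ?_⟩
  · -- separable → lam ≤ 1/2
    rintro ⟨n, c, σ, τ, hc0, hc1, hσ, hτ, hρ⟩
    have hentry : ∀ p q : Fin 2 × Fin 2, wernerState lam p q
        = ∑ i, (c i : ℂ) * (σ i p.1 q.1 * τ i p.2 q.2) := by
      intro p q
      rw [hρ]
      simp [Matrix.sum_apply, Matrix.kroneckerMap_apply]
    have hsum : (2 * lam : ℝ)
        = ∑ i, c i * (σ i 0 0 * τ i 1 1 + σ i 1 1 * τ i 0 0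
            - σ i 0 1 * τ i 1 0 - σ i 1 0 * τ i 0 1).re := by
      have := werner_entry lam
      rw [hentry (0,1) (0,1), hentry (1,0) (1,0), hentry (0,1) (1,0), hentry (1,0) (0,1)] at this
      rw [← this]
      rw [← Finset.sum_add_distrib, ← Finset.sum_sub_distrib, ← Finset.sum_sub_distrib]
      rw [Complex.re_sum]
      refine Finset.sum_congr rfl fun i _ => ?_
      have : (c i : ℂ) * (σ i 0 0 * τ i 1 1) + (c i : ℂ) * (σ i 1 1 * τ i 0 0)
          - (c i : ℂ) * (σ i 0 1 * τ i 1 0) - (c i : ℂ) * (σ i 1 0 * τ i 0 1)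
          = (c i : ℂ) * (σ i 0 0 * τ i 1 1 + σ i 1 1 * τ i 0 0
            - σ i 0 1 * τ i 1 0 - σ i 1 0 * τ i 0 1) := by ring
      rw [this]
      exact Complex.re_ofReal_mul _ _
    have hle : (2 * lam : ℝ) ≤ 1 := by
      rw [hsum, ← hc1]
      refine Finset.sum_le_sum fun i _ => ?_
      calc c i * (σ i 0 0 * τ i 1 1 + σ i 1 1 * τ i 0 0
            - σ i 0 1 * τ i 1 0 - σ i 1 0 * τ i 0 1).re
          ≤ c i * 1 := mul_le_mul_of_nonneg_left (key_bound (hσ i) (hτ i)) (hc0 i)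
        _ = c i := mul_one _
    linarith
  · -- lam ≤ 1/2 → separable
    intro hhalf
    refine ⟨12, cw lam, sig, tau, ?_, ?_, ?_, ?_, werner_decomp lam⟩
    · intro i
      fin_cases i <;> norm_num [cw] <;> linarith
    · simp [cw, Fin.sum_univ_succ]
      ring
    · intro i
      fin_cases i <;> simp [sig] <;>
        first
          | exact dm_Xp | exact dm_Xm | exact dm_Yp | exact dm_Ym | exact dm_Zp | exact dm_Zm
    · intro i
      fin_cases i <;> simp [tau] <;>
        first
          | exact dm_Xp | exact dm_Xm | exact dm_Yp | exact dm_Ym | exact dm_Zp | exact dm_Zm
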